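/- If (A) and (B) hold, then for any subset T ⊆ Σ, T'' = T̄⁰, where T' is the orthocomplement in Σ and T̄⁰ the set of superpositions relative to L₀. -/
import Mathlib


universe u v

/-- A state property system: states, a complete lattice of properties, and
the actuality map `xi` assigning to each state the set of actual properties. -/
structure SPS (σ : Type u) (L : Type v) [CompleteLattice L] where
  xi : σ → Set L
  top_mem : ∀ p, ⊤ ∈ xi p
  bot_not_mem : ∀ p, ⊥ ∉ xi p
  sInf_mem : ∀ (p : σ) (A : Set L), (∀ a ∈ A, a ∈ xi p) ↔ sInf A ∈ xi p
  le_iff : ∀ a b : L, a ≤ b ↔ ∀ r, a ∈ xi r → b ∈ xi r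

variable {σ : Type u} {L : Type v} [CompleteLattice L]

/-- λ{p,q} : the set of superpositions of the pair p, q. -/
def SPS.lamPair (S : SPS σ L) (p q : σ) : Set σ := {s | S.xi p ∩ S.xi q ⊆ S.xi s}

/-- A set is λ-closed if it contains λ{p,q} for each pair of its points. -/
def SPS.lamClosed (S : SPS σ L) (T : Set σ) : Prop :=
  ∀ p ∈ T, ∀ q ∈ T, S.lamPair p q ⊆ T

/-- λ(P) : the intersection of all λ-closed sets containing P. -/
def SPS.lam (S : SPS σ L) (P : Set σ) : Set σ :=
  ⋂₀ {G | S.lamClosed G ∧ P ⊆ G}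

/-- The set of superpositions of a set of states. -/
def SPS.bar (S : SPS σ L) (T : Set σ) : Set σ :=
  {p | (⋂ s ∈ T, S.xi s) ⊆ S.xi p}

/-- Property (A): at least two states and `xi` order-reflecting (injective). -/
def SPS.propA (S : SPS σ L) : Prop :=
  (∃ p q : σ, p ≠ q) ∧ ∀ p q : σ, S.xi p ⊆ S.xi q → p = q

/-- p is a minimal superposition of A. -/
def SPS.minSup (S : SPS σ L) (A : Set σ) (p : σ) : Prop :=
  p ∈ S.bar A ∧ ∀ Q : Set σ, Q ⊂ A → p ∉ S.bar Q

/-- The minimal superposition principle for a given set A. -/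
def SPS.MSPon (S : SPS σ L) (A : Set σ) : Prop :=
  ∀ p : σ, S.minSup A p →
    ∀ S₁ S₂ : Set σ, S₁ ⊂ A → S₂ ⊂ A → S₁ ∩ S₂ = ∅ → S₁ ∪ S₂ = A →
      (S.bar (S₁ ∪ {p}) ∩ S.bar S₂).Nonempty

/-- n-MSP : MSP for all sets of cardinality at most n. -/
def SPS.nMSP (S : SPS σ L) (n : ℕ) : Prop :=
  ∀ A : Set σ, A.Finite → A.ncard ≤ n → S.MSPon A

/-- f-MSP : MSP for all finite sets. -/
def SPS.fMSP (S : SPS σ L) : Prop := ∀ A : Set σ, A.Finite → S.MSPon A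

/-- Probability structure on a subset `L0` of the property lattice:
`mu p a` is the probability of property `a` in state `p`, satisfying (Oi)-(Oiii). -/
structure ProbStruct (S : SPS σ L) (L0 : Set L) where
  bot_mem : (⊥ : L) ∈ L0
  top_mem : (⊤ : L) ∈ L0
  mu : σ → L → ℝ
  nonneg : ∀ p, ∀ a ∈ L0, 0 ≤ mu p a
  le_one : ∀ p, ∀ a ∈ L0, mu p a ≤ 1
  Oi : ∀ p, ∀ a ∈ L0, (mu p a = 1 ↔ a ∈ S.xi p)
  Oii : ∀ p, ∀ a ∈ L0, ∀ b ∈ L0, a ≤ b → mu p a ≤ mu p b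
  Oiii : ∀ a : ℕ → L, (∀ i, a i ∈ L0) →
    (∀ i j, i ≠ j → ∀ p, mu p (a i) + mu p (a j) ≤ 1) →
    ∃ b ∈ L0, ∀ p, HasSum (fun i => mu p (a i)) (1 - mu p b)

/-- `oc` is the orthocomplementation on `L0` associated with the probability structure. -/
def ocProp (S : SPS σ L) (L0 : Set L) (P : ProbStruct S L0) (oc : L → L) : Prop :=
  ∀ a ∈ L0, oc a ∈ L0 ∧ ∀ p, P.mu p a + P.mu p (oc a) = 1

/-- The atom associated to a state: the smallest actual property. -/
def atomOf (S : SPS σ L) (p : σ) : L := sInf (S.xi p)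

/-- Orthogonality of states: p ⊥ q iff some a ∈ L0 is actual in p with a' actual in q. -/
def statePerp (S : SPS σ L) (L0 : Set L) (oc : L → L) (p q : σ) : Prop :=
  ∃ a ∈ L0, a ∈ S.xi p ∧ oc a ∈ S.xi q

/-- T' : the set of states orthogonal to every state of T. -/
def setPerp (S : SPS σ L) (L0 : Set L) (oc : L → L) (T : Set σ) : Set σ :=
  {p | ∀ t ∈ T, statePerp S L0 oc p t}

/-- Superpositions relative to L0. -/
def bar0 (S : SPS σ L) (L0 : Set L) (T : Set σ) : Set σ :=
  {s | ∀ a ∈ L0, (∀ t ∈ T, a ∈ S.xi t) → a ∈ S.xi s}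

theorem stmt14 (S : SPS σ L) (L0 : Set L) (P : ProbStruct S L0)
    (oc : L → L) (hoc : ocProp S L0 P oc)
    (hA : S.propA)
    (hB : ∀ s : σ, atomOf S s ∈ L0) :
    ∀ T : Set σ, setPerp S L0 oc (setPerp S L0 oc T) = bar0 S L0 T := by
  intro T
  have hatom : ∀ s : σ, atomOf S s ∈ S.xi s :=
    fun s => (S.sInf_mem s (S.xi s)).mp (fun a ha => ha)
  have hmu1 : ∀ (p : σ) (a : L), a ∈ L0 → a ∈ S.xi p → P.mu p a = 1 :=
    fun p a ha h => (P.Oi p a ha).mpr h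
  have hsum : ∀ (p : σ) (a : L), a ∈ L0 → P.mu p a + P.mu p (oc a) = 1 :=
    fun p a ha => (hoc a ha).2 p
  have hocL0 : ∀ a ∈ L0, oc a ∈ L0 := fun a ha => (hoc a ha).1
  have hzero_oc : ∀ (p : σ) (a : L), a ∈ L0 → P.mu p a = 0 → oc a ∈ S.xi p := by
    intro p a ha h
    exact (P.Oi p (oc a) (hocL0 a ha)).mp (by linarith [hsum p a ha])
  have hoc_zero : ∀ (p : σ) (a : L), a ∈ L0 → oc a ∈ S.xi p → P.mu p a = 0 := by
    intro p a ha h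
    have := hmu1 p (oc a) (hocL0 a ha) h
    linarith [hsum p a ha]
  have hperp_mu : ∀ p q : σ, statePerp S L0 oc p q ↔ P.mu q (atomOf S p) = 0 := by
    intro p q
    constructor
    · rintro ⟨a, ha, hap, haq⟩
      have h1 : atomOf S p ≤ a := sInf_le hap
      have h2 : P.mu q a = 0 := hoc_zero q a ha haq
      have h3 := P.Oii q (atomOf S p) (hB p) a ha h1
      have h4 := P.nonneg q (atomOf S p) (hB p)
      linarith
    · intro h
      exact ⟨atomOf S p, hB p, hatom p, hzero_oc q _ (hB p) h⟩
  ext s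
  simp only [setPerp, bar0, Set.mem_setOf_eq]
  constructor
  · intro hs a ha hT
    have hle : oc a ≤ oc (atomOf S s) := by
      rw [S.le_iff]
      intro p hp
      have hpT' : ∀ t ∈ T, statePerp S L0 oc p t := by
        intro t ht
        rw [hperp_mu]
        have h1 : atomOf S p ≤ oc a := sInf_le hp
        have h2 : P.mu t (oc a) = 0 := by
          have := hmu1 t a ha (hT t ht); linarith [hsum t a ha]
        have h3 := P.Oii t (atomOf S p) (hB p) (oc a) (hocL0 a ha) h1
        have h4 := P.nonneg t (atomOf S p) (hB p)
        linarith
      have hmuz : P.mu p (atomOf S s) = 0 := (hperp_mu s p).mp (hs p hpT')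
      exact hzero_oc p _ (hB s) hmuz
    have h1 : P.mu s (oc a) ≤ P.mu s (oc (atomOf S s)) :=
      P.Oii s _ (hocL0 a ha) _ (hocL0 _ (hB s)) hle
    have h2 : P.mu s (atomOf S s) = 1 := hmu1 s _ (hB s) (hatom s)
    have h3 := hsum s _ (hB s)
    have h4 := hsum s a ha
    have h5 := P.nonneg s (oc a) (hocL0 a ha)
    exact (P.Oi s a ha).mp (by linarith)
  · intro hs p hp
    have hξ : oc (atomOf S p) ∈ S.xi s := by
      apply hs _ (hocL0 _ (hB p))
      intro t ht
      exact hzero_oc t _ (hB p) ((hperp_mu p t).mp (hp t ht))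
    refine ⟨oc (atomOf S p), hocL0 _ (hB p), hξ, ?_⟩
    apply hzero_oc p _ (hocL0 _ (hB p))
    have h2 : P.mu p (atomOf S p) = 1 := hmu1 p _ (hB p) (hatom p)
    linarith [hsum p _ (hB p)]
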